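/- Let G = Z_{2^{a_1}} ⊕ ... ⊕ Z_{2^{a_k}} ⊕ J with 1 ≤ a_1 ≤ ... ≤ a_k, |J| odd, and let I ⊆ {1,...,k} be nonempty with i = min I. Then the subgroup H_I = { x ∈ G : Σ_{i∈I} x_i ≡ 0 (mod 2) } is isomorphic to Z_{2^{a_1}} ⊕ ... ⊕ Z_{2^{a_i - 1}} ⊕ ... ⊕ Z_{2^{a_k}} ⊕ J (i.e., the i-th cyclic factor has its order halved). -/

import Mathlib

/-- The subgroup `H_I = { (x, y) : Σ_{i ∈ I} x_i ≡ 0 (mod 2) }` of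
`(Π i, Z_{2^{a i}}) × J`, defined as the kernel of the homomorphism
`(x, y) ↦ Σ_{i ∈ I} (x_i mod 2)`. -/
def Hsub {k : ℕ} (a : Fin k → ℕ) (ha : ∀ i, a i ≠ 0) (J : Type*) [AddCommGroup J]
    (I : Finset (Fin k)) : AddSubgroup ((∀ i : Fin k, ZMod (2 ^ a i)) × J) :=
  AddMonoidHom.ker (∑ i ∈ I,
    ((ZMod.castHom (dvd_pow_self 2 (ha i)) (ZMod 2)).toAddMonoidHom.comp
      ((Pi.evalAddMonoidHom (fun j => ZMod (2 ^ a j)) i).comp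
        (AddMonoidHom.fst (∀ j : Fin k, ZMod (2 ^ a j)) J))))


noncomputable def kerCompEquiv {A B C : Type*} [AddCommGroup A] [AddCommGroup B] [AddCommGroup C]
    (e : A ≃+ B) (g : B →+ C) : (g.comp e.toAddMonoidHom).ker ≃+ g.ker := by
  refine (e.addSubgroupMap (g.comp e.toAddMonoidHom).ker).trans (AddEquiv.addSubgroupCongr ?_)
  ext x
  simp only [AddSubgroup.mem_map, AddMonoidHom.mem_ker, AddMonoidHom.comp_apply,
    AddEquiv.coe_toAddMonoidHom]
  constructor
  · rintro ⟨y, hy, rfl⟩; exact hy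
  · intro hx; exact ⟨e.symm x, by simpa using hx, by simp⟩

def addPiSplitAt {α : Type*} [DecidableEq α] (i : α) (β : α → Type*)
    [∀ a, AddZeroClass (β a)] : (∀ j, β j) ≃+ β i × ∀ j : { j // j ≠ i }, β j :=
  AddEquiv.mk' (Equiv.piSplitAt i β) (fun _ _ => rfl)

theorem ker_comp_fst {A B C : Type*} [AddCommGroup A] [AddCommGroup B] [AddCommGroup C]
    (f : A →+ C) : (f.comp (AddMonoidHom.fst A B)).ker = (f.ker).prod ⊤ := by
  ext x
  simp [AddMonoidHom.mem_ker, AddSubgroup.mem_prod]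

noncomputable def kerCastEquiv (m : ℕ) (hm : m ≠ 0) :
    (AddMonoidHom.ker (ZMod.castHom (dvd_pow_self 2 hm) (ZMod 2)).toAddMonoidHom)
      ≃+ ZMod (2 ^ (m - 1)) := by
  set f := (ZMod.castHom (dvd_pow_self 2 hm) (ZMod 2)).toAddMonoidHom with hf
  have hsurj : Function.Surjective f := by
    intro y
    refine ⟨(y.val : ZMod (2 ^ m)), ?_⟩
    simp [hf, map_natCast]
  have hcard : Nat.card (AddMonoidHom.ker f) = 2 ^ (m - 1) := by
    have h1 := AddSubgroup.card_eq_card_quotient_mul_card_addSubgroup (AddMonoidHom.ker f)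
    have h2 : Nat.card (ZMod (2 ^ m) ⧸ AddMonoidHom.ker f) = 2 := by
      rw [Nat.card_congr (QuotientAddGroup.quotientKerEquivOfSurjective f hsurj).toEquiv]
      simp [Nat.card_eq_fintype_card]
    rw [h2] at h1
    have h3 : Nat.card (ZMod (2 ^ m)) = 2 ^ m := by simp [Nat.card_eq_fintype_card]
    rw [h3] at h1
    obtain ⟨m', rfl⟩ := Nat.exists_eq_succ_of_ne_zero hm
    have key : 2 * Nat.card (AddMonoidHom.ker f) = 2 * 2 ^ m' := by
      rw [← h1, pow_succ]; ring
    simpa using Nat.eq_of_mul_eq_mul_left (by norm_num) key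
  have hcyc : IsAddCyclic (AddMonoidHom.ker f) := inferInstance
  exact (zmodAddCyclicAddEquiv hcyc).symm.trans (ZMod.ringEquivCongr hcard).toAddEquiv



/-- For nonempty `I` with `i = min I`, the subgroup `H_I` of
`G = Z_{2^{a_1}} ⊕ ... ⊕ Z_{2^{a_k}} ⊕ J` is isomorphic to the direct sum in which the
`i`-th cyclic factor `Z_{2^{a_i}}` is replaced by `Z_{2^{a_i - 1}}`. -/
theorem stmt3 {k : ℕ} (a : Fin k → ℕ) (ha : ∀ i, a i ≠ 0) (hmono : Monotone a)
    (J : Type*) [AddCommGroup J] [Fintype J] (hJ : Odd (Fintype.card J))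
    (I : Finset (Fin k)) (hI : I.Nonempty) :
    Nonempty ((Hsub a ha J I) ≃+
      ((∀ j : Fin k, ZMod (2 ^ (if j = I.min' hI then a j - 1 else a j))) × J)) := by
  classical
  set i := I.min' hI with hi
  set G := (∀ j : Fin k, ZMod (2 ^ a j)) × J with hG
  -- the summand homs
  set c : ∀ j : Fin k, (G →+ ZMod 2) := fun j =>
    ((ZMod.castHom (dvd_pow_self 2 (ha j)) (ZMod 2)).toAddMonoidHom.comp
      ((Pi.evalAddMonoidHom (fun j => ZMod (2 ^ a j)) j).comp
        (AddMonoidHom.fst (∀ j : Fin k, ZMod (2 ^ a j)) J))) with hc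
  set φI : G →+ ZMod 2 := ∑ j ∈ I, c j with hφI
  -- the "correction" hom
  have hdvd : ∀ j ∈ I, (2:ℕ) ^ a i ∣ 2 ^ a j := fun j hj =>
    pow_dvd_pow 2 (hmono (I.min'_le j hj))
  set t : G →+ ZMod (2 ^ a i) := ∑ j ∈ (I.erase i).attach,
    ((ZMod.castHom (hdvd j (Finset.mem_of_mem_erase j.2)) (ZMod (2 ^ a i))).toAddMonoidHom.comp
      ((Pi.evalAddMonoidHom (fun j => ZMod (2 ^ a j)) (j : Fin k)).comp
        (AddMonoidHom.fst (∀ j : Fin k, ZMod (2 ^ a j)) J))) with ht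
  set s : G →+ G := (AddMonoidHom.inl _ J).comp
    ((AddMonoidHom.single (fun j => ZMod (2 ^ a j)) i).comp t) with hs
  have hsapp : ∀ g : G, s g = (Pi.single i (t g), 0) := fun g => rfl
  have hts : ∀ g : G, t (s g) = 0 := by
    intro g
    rw [ht]
    rw [AddMonoidHom.finset_sum_apply]
    apply Finset.sum_eq_zero
    intro j _
    have hj : (j : Fin k) ≠ i := Finset.ne_of_mem_erase j.2
    show ((Pi.single i (t g) : ∀ j, ZMod (2 ^ a j)) ↑j : ZMod (2 ^ a ↑j)).cast = 0
    rw [Pi.single_eq_of_ne hj]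
    simp
  have hss : ∀ g : G, s (s g) = 0 := by
    intro g
    rw [hsapp, hts]
    simp [hsapp]
    rfl
  -- the automorphism
  set e : G ≃+ G := AddEquiv.mk' ⟨fun g => g + s g, fun g => g - s g,
    fun g => by simp only [map_add, hss]; abel,
    fun g => by simp only [map_sub, hss]; abel⟩
    (fun x y => by simp only [Equiv.coe_fn_mk, map_add]; abel) with he
  have heapp : ∀ g : G, e g = g + s g := fun g => rfl
  set f2i := (ZMod.castHom (dvd_pow_self 2 (ha i)) (ZMod 2)).toAddMonoidHom with hf2i
  have hφs : ∀ g : G, φI (s g) = ∑ j ∈ (I.erase i).attach, c ↑j g := by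
    intro g
    rw [hφI, AddMonoidHom.finset_sum_apply]
    have h0 : ∑ j ∈ I, c j (s g) = c i (s g) :=
      Finset.sum_eq_single_of_mem i (I.min'_mem hI) (fun b _ hbne => by
        show ((Pi.single i (t g) : ∀ j, ZMod (2 ^ a j)) b : ZMod (2 ^ a b)).cast = 0
        rw [Pi.single_eq_of_ne hbne]; simp)
    rw [h0]
    have h1 : c i (s g) = f2i (t g) := by
      show ((Pi.single i (t g) : ∀ j, ZMod (2 ^ a j)) i : ZMod (2 ^ a i)).cast = _
      rw [Pi.single_eq_same]; rfl
    rw [h1, ht, AddMonoidHom.finset_sum_apply, map_sum]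
    refine Finset.sum_congr rfl (fun j _ => ?_)
    exact DFunLike.congr_fun (ZMod.castHom_comp (dvd_pow_self 2 (ha i))
      (hdvd j (Finset.mem_of_mem_erase j.2))) (g.1 ↑j)
  have hφe : ∀ g : G, φI (e g) = c i g := by
    intro g
    rw [heapp, map_add, hφs]
    have hsplit : φI g = c i g + ∑ j ∈ (I.erase i).attach, c ↑j g := by
      rw [hφI, AddMonoidHom.finset_sum_apply,
        ← Finset.add_sum_erase _ _ (I.min'_mem hI)]
      congr 1
      rw [← Finset.sum_attach (I.erase i) (fun j => c j g)]
    rw [hsplit]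
    have h2 : ∀ x : ZMod 2, x + x = 0 := by decide
    rw [add_assoc, h2, add_zero]
  have hker : Hsub a ha J I = AddMonoidHom.ker ((c i).comp e.symm.toAddMonoidHom) := by
    have hcomp : φI = (c i).comp e.symm.toAddMonoidHom := by
      ext g
      show φI g = c i (e.symm g)
      rw [← hφe (e.symm g), e.apply_symm_apply]
    show AddMonoidHom.ker φI = _
    rw [hcomp]
  set Pi' := ∀ j : { j : Fin k // j ≠ i }, ZMod (2 ^ a (j : Fin k)) with hPi'
  set E : G ≃+ (ZMod (2 ^ a i) × (Pi' × J)) :=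
    (AddEquiv.prodCongr (addPiSplitAt i (fun j => ZMod (2 ^ a j))) (AddEquiv.refl J)).trans
      AddEquiv.prodAssoc with hE
  have hci : c i = (f2i.comp (AddMonoidHom.fst _ (Pi' × J))).comp E.toAddMonoidHom := by
    ext g
    show (ZMod.castHom (dvd_pow_self 2 (ha i)) (ZMod 2)) (g.1 i) = f2i (E g).1
    have : (E g).1 = g.1 i := rfl
    rw [this]
    rfl
  have step1 : (Hsub a ha J I) ≃+ AddMonoidHom.ker (c i) :=
    (AddEquiv.addSubgroupCongr hker).trans (kerCompEquiv e.symm (c i))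
  have step2 : AddMonoidHom.ker (c i) ≃+
      AddMonoidHom.ker (f2i.comp (AddMonoidHom.fst _ (Pi' × J))) :=
    (AddEquiv.addSubgroupCongr (by rw [hci])).trans
      (kerCompEquiv E (f2i.comp (AddMonoidHom.fst _ (Pi' × J))))
  have step3 : AddMonoidHom.ker (f2i.comp (AddMonoidHom.fst _ (Pi' × J))) ≃+
      (ZMod (2 ^ (a i - 1)) × (Pi' × J)) :=
    (AddEquiv.addSubgroupCongr (ker_comp_fst f2i)).trans
      ((AddSubgroup.prodEquiv _ _).trans
        (AddEquiv.prodCongr (kerCastEquiv (a i) (ha i)) AddSubgroup.topEquiv))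
  have c1 : ZMod (2 ^ (a i - 1)) ≃+ ZMod (2 ^ (if i = i then a i - 1 else a i)) :=
    (ZMod.ringEquivCongr (by simp)).toAddEquiv
  have c2 : Pi' ≃+ (∀ j : { j : Fin k // j ≠ i },
      ZMod (2 ^ (if (j : Fin k) = i then a (j : Fin k) - 1 else a (j : Fin k)))) :=
    AddEquiv.piCongrRight (fun j => (ZMod.ringEquivCongr (by simp [j.2])).toAddEquiv)
  have F : (ZMod (2 ^ (a i - 1)) × (Pi' × J)) ≃+
      ((∀ j : Fin k, ZMod (2 ^ (if j = i then a j - 1 else a j))) × J) :=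
    (AddEquiv.prodCongr c1 (AddEquiv.prodCongr c2 (AddEquiv.refl J))).trans
      (AddEquiv.prodAssoc.symm.trans
        (AddEquiv.prodCongr
          (addPiSplitAt i (fun j => ZMod (2 ^ (if j = i then a j - 1 else a j)))).symm
          (AddEquiv.refl J)))
  exact ⟨step1.trans (step2.trans (step3.trans F))⟩
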